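/- Let f : ℝ → ℝ be three times differentiable with |f'''(s)| ≤ M for all s ∈ ℝ. Fix θ ∈ [0,1], dt > 0 and t ∈ ℝ, and set t^{n+1} := t + ((1−θ)/2)·dt and t^n := t − ((1+θ)/2)·dt (so t plays the role of the intermediate time t^{n,θ}). Then the θ-weighted average f^{n,θ} := ((1+θ)/2)·f(t^{n+1}) + ((1−θ)/2)·f(t^n) satisfies |f^{n,θ} − f(t) − (1/8)(1+θ)(1−θ)·dt²·f''(t)| ≤ (M/24)·dt³. -/

import Mathlib

open Set

private lemma iterWithin_eq (f : ℝ → ℝ)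
    (hf : ∀ n ≤ 2, Differentiable ℝ (iteratedDeriv n f))
    {s : Set ℝ} (hs : UniqueDiffOn ℝ s) :
    ∀ n ≤ 3, ∀ x ∈ s, iteratedDerivWithin n f s x = iteratedDeriv n f x := by
  intro n hn
  induction n with
  | zero => intro x hx; simp
  | succ m ih =>
    intro x hx
    have hm : m ≤ 2 := by omega
    rw [iteratedDerivWithin_succ, iteratedDeriv_succ]
    have heq : derivWithin (iteratedDerivWithin m f s) s x
        = derivWithin (iteratedDeriv m f) s x :=
      derivWithin_congr (fun y hy => ih (by omega) y hy) (ih (by omega) x hx)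
    rw [heq, ((hf m hm) x).derivWithin (hs x hx)]

private lemma key_taylor (f : ℝ → ℝ) (M : ℝ)
    (hf : ∀ n ≤ 2, Differentiable ℝ (iteratedDeriv n f))
    (hM : ∀ s : ℝ, |iteratedDeriv 3 f s| ≤ M)
    (t h : ℝ) (hh : 0 ≤ h) :
    |f (t + h) - f t - h * deriv f t - h ^ 2 / 2 * iteratedDeriv 2 f t|
      ≤ M * h ^ 3 / 6 := by
  have hM0 : 0 ≤ M := le_trans (abs_nonneg _) (hM 0)
  rcases eq_or_lt_of_le hh with rfl | hh
  · simp
  · set s : Set ℝ := Icc t (t + h) with hsdef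
    have hts : t < t + h := by linarith
    have hs : UniqueDiffOn ℝ s := uniqueDiffOn_Icc hts
    have hiter := iterWithin_eq f hf hs
    have hcd : ContDiff ℝ 2 f := by
      rw [show (2 : WithTop ℕ∞) = 1 + 1 from by norm_num, contDiff_succ_iff_deriv]
      refine ⟨by simpa using hf 0 (by norm_num), by simp, ?_⟩
      rw [show (1 : WithTop ℕ∞) = 0 + 1 from by norm_num, contDiff_succ_iff_deriv]
      refine ⟨by simpa [iteratedDeriv_one] using hf 1 (by norm_num), by simp, ?_⟩
      rw [contDiff_zero]
      have : deriv (deriv f) = iteratedDeriv 2 f := by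
        ext x; rw [iteratedDeriv_succ, iteratedDeriv_one]
      rw [this]
      exact (hf 2 le_rfl).continuous
    have hf' : DifferentiableOn ℝ (iteratedDerivWithin 2 f s) (Ioo t (t + h)) := by
      apply DifferentiableOn.congr ((hf 2 le_rfl).differentiableOn)
      intro x hx
      exact hiter 2 (by norm_num) x (Ioo_subset_Icc_self hx)
    obtain ⟨x', hx', hR⟩ := taylor_mean_remainder_lagrange (n := 2) hts.ne
      (by rw [uIcc_of_le hts.le, ← hsdef]; exact_mod_cast hcd.contDiffOn)
      (by rw [uIcc_of_le hts.le, uIoo_of_le hts.le, ← hsdef]; exact hf')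
    rw [uIcc_of_le hts.le, ← hsdef] at hR
    rw [uIoo_of_le hts.le] at hx'
    rw [taylor_within_apply] at hR
    have e0 := hiter 0 (by norm_num) t (left_mem_Icc.2 hts.le)
    have e1 := hiter 1 (by norm_num) t (left_mem_Icc.2 hts.le)
    have e2 := hiter 2 (by norm_num) t (left_mem_Icc.2 hts.le)
    have e3 := hiter 3 le_rfl x' (Ioo_subset_Icc_self hx')
    simp only [Finset.sum_range_succ, Finset.sum_range_zero] at hR
    rw [e0, e1, e2, e3] at hR
    simp only [iteratedDeriv_zero, iteratedDeriv_one] at hR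
    norm_num at hR
    have h6 : ((Nat.factorial 3 : ℕ) : ℝ) = 6 := by norm_num [Nat.factorial]
    have habs : f (t + h) - f t - h * deriv f t - h ^ 2 / 2 * iteratedDeriv 2 f t
        = iteratedDeriv 3 f x' * h ^ 3 / 6 := by linear_combination hR
    rw [habs]
    have : |iteratedDeriv 3 f x' * h ^ 3 / 6|
        = |iteratedDeriv 3 f x'| * h ^ 3 / 6 := by
      rw [abs_div, abs_mul]
      simp [abs_of_pos hh]
    rw [this]
    have := hM x'
    have h3 : (0:ℝ) ≤ h ^ 3 := by positivity
    calc |iteratedDeriv 3 f x'| * h ^ 3 / 6 ≤ M * h ^ 3 / 6 := by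
          gcongr
      _ = M * h ^ 3 / 6 := rfl

/-- Taylor-expansion identity (9) for the θ-family of time discretizations:
the θ-weighted average `f^{n,θ}` equals `f(t) + (1/8)(1+θ)(1-θ) dt² f''(t)`
up to an error of size `(M/24) dt³` when `|f'''| ≤ M`. -/
theorem stmt_0 (f : ℝ → ℝ) (M : ℝ)
    (hf : ∀ n ≤ 2, Differentiable ℝ (iteratedDeriv n f))
    (hM : ∀ s : ℝ, |iteratedDeriv 3 f s| ≤ M)
    (θ dt t : ℝ) (hθ : θ ∈ Set.Icc (0 : ℝ) 1) (hdt : 0 < dt) :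
    |((1 + θ) / 2) * f (t + ((1 - θ) / 2) * dt)
      + ((1 - θ) / 2) * f (t - ((1 + θ) / 2) * dt)
      - f t - (1 / 8) * (1 + θ) * (1 - θ) * dt ^ 2 * iteratedDeriv 2 f t|
      ≤ (M / 24) * dt ^ 3 := by
  obtain ⟨hθ0, hθ1⟩ := hθ
  set a : ℝ := ((1 - θ) / 2) * dt with ha
  set b : ℝ := ((1 + θ) / 2) * dt with hb
  have ha0 : 0 ≤ a := mul_nonneg (by linarith) hdt.le
  have hb0 : 0 ≤ b := mul_nonneg (by linarith) hdt.le
  have hM0 : 0 ≤ M := le_trans (abs_nonneg _) (hM 0)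
  -- right point
  have hA := key_taylor f M hf hM t a ha0
  -- left point via reflection
  set g : ℝ → ℝ := fun x => f (-x) with hg
  have hgiter : ∀ n : ℕ, ∀ x : ℝ,
      iteratedDeriv n g x = (-1 : ℝ) ^ n * iteratedDeriv n f (-x) := by
    intro n x
    simpa [smul_eq_mul] using iteratedDeriv_comp_neg n f x
  have hgf : ∀ n ≤ 2, Differentiable ℝ (iteratedDeriv n g) := by
    intro n hn
    have : iteratedDeriv n g = fun x => (-1 : ℝ) ^ n * iteratedDeriv n f (-x) :=
      funext fun x => hgiter n x
    rw [this]
    exact (((hf n hn).comp differentiable_neg).const_mul _)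
  have hgM : ∀ s : ℝ, |iteratedDeriv 3 g s| ≤ M := by
    intro s
    rw [hgiter 3 s]
    simpa [abs_mul] using hM (-s)
  have hB := key_taylor g M hgf hgM (-t) b hb0
  have hgd : deriv g (-t) = - deriv f t := by
    have := hgiter 1 (-t)
    simpa [iteratedDeriv_one] using this
  have hg2 : iteratedDeriv 2 g (-t) = iteratedDeriv 2 f t := by
    simpa using hgiter 2 (-t)
  rw [show -t + b = -(t - b) by ring] at hB
  simp only [hgd, hg2] at hB
  simp only [hg, neg_neg, hgd, hg2] at hB
  -- now hB : |f (t - b) - f t - b * (-deriv f t) - b^2/2 * f'' t| ≤ M * b^3/6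
  set A := f (t + a) - f t - a * deriv f t - a ^ 2 / 2 * iteratedDeriv 2 f t with hAdef
  set B := f (t - b) - f t + b * deriv f t - b ^ 2 / 2 * iteratedDeriv 2 f t with hBdef
  have hBabs : |B| ≤ M * b ^ 3 / 6 := by
    convert hB using 2; ring
  have hkey : ((1 + θ) / 2) * f (t + a) + ((1 - θ) / 2) * f (t - b)
      - f t - (1 / 8) * (1 + θ) * (1 - θ) * dt ^ 2 * iteratedDeriv 2 f t
      = ((1 + θ) / 2) * A + ((1 - θ) / 2) * B := by
    rw [hAdef, hBdef, ha, hb]; ring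
  rw [hkey]
  have hw1 : (0:ℝ) ≤ (1 + θ) / 2 := by linarith
  have hw2 : (0:ℝ) ≤ (1 - θ) / 2 := by linarith
  calc |((1 + θ) / 2) * A + ((1 - θ) / 2) * B|
      ≤ ((1 + θ) / 2) * |A| + ((1 - θ) / 2) * |B| := by
        refine (abs_add_le _ _).trans ?_
        rw [abs_mul, abs_mul, abs_of_nonneg hw1, abs_of_nonneg hw2]
    _ ≤ ((1 + θ) / 2) * (M * a ^ 3 / 6) + ((1 - θ) / 2) * (M * b ^ 3 / 6) := by
        gcongr
    _ ≤ (M / 24) * dt ^ 3 := by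
        rw [ha, hb]
        nlinarith [sq_nonneg (θ), sq_nonneg (1 - θ), sq_nonneg (1 + θ),
          mul_pos hdt (mul_pos hdt hdt), sq_nonneg (θ * dt),
          mul_nonneg (mul_nonneg hdt.le hdt.le) hdt.le,
          mul_nonneg hM0 (mul_nonneg (mul_nonneg hdt.le hdt.le) hdt.le),
          mul_nonneg (mul_nonneg hM0 hθ0) (mul_nonneg (mul_nonneg hdt.le hdt.le) hdt.le),
          sq_nonneg (θ * (1 - θ))]
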